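/- Exponential contraction for the frozen fast equation in the deterministic (noise-free) case: let g : H → H be Lipschitz continuous with constant L_g satisfying L_g < π²/L². Suppose Y, Y' : [0,∞) → H are continuous and satisfy the mild equations Y_t = G_t y + ∫₀ᵗ G_{t−s} g(Y_s) ds and Y'_t = G_t y' + ∫₀ᵗ G_{t−s} g(Y'_s) ds for initial data y, y' ∈ H. Then for every t ≥ 0: ‖Y_t − Y'_t‖ ≤ e^{−(π²/L² − L_g) t} ‖y − y'‖. -/

import Mathlib

open MeasureTheory Real
open scoped InnerProductSpace ENNReal

noncomputable section

/-- Lebesgue measure on the interval `(0, L)`. -/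
def μL (L : ℝ) : Measure ℝ := volume.restrict (Set.Ioo (0:ℝ) L)

instance (L : ℝ) : IsFiniteMeasure (μL L) := by
  constructor
  unfold μL
  rw [Measure.restrict_apply_univ, Real.volume_Ioo]
  exact ENNReal.ofReal_lt_top

/-- The Hilbert space `H = L²((0,L), ℝ)`. -/
abbrev Hsp (L : ℝ) := Lp ℝ 2 (μL L)

/-- The function `ξ ↦ √(2/L) · sin(kπξ/L)`. -/
def efun (L : ℝ) (k : ℕ) : ℝ → ℝ :=
  fun ξ => Real.sqrt (2 / L) * Real.sin ((k : ℝ) * π * ξ / L)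

lemma efun_continuous (L : ℝ) (k : ℕ) : Continuous (efun L k) := by
  unfold efun; fun_prop

lemma efun_bound (L : ℝ) (k : ℕ) (ξ : ℝ) : ‖efun L k ξ‖ ≤ Real.sqrt (2 / L) := by
  have h1 : |Real.sin ((k : ℝ) * π * ξ / L)| ≤ 1 :=
    abs_le.mpr ⟨Real.neg_one_le_sin _, Real.sin_le_one _⟩
  calc ‖efun L k ξ‖ = |Real.sqrt (2 / L)| * |Real.sin ((k : ℝ) * π * ξ / L)| := by
        rw [Real.norm_eq_abs, efun, abs_mul]
    _ ≤ Real.sqrt (2 / L) * 1 := by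
        rw [abs_of_nonneg (Real.sqrt_nonneg _)]
        exact mul_le_mul_of_nonneg_left h1 (Real.sqrt_nonneg _)
    _ = Real.sqrt (2 / L) := mul_one _

lemma efun_memℒp (L : ℝ) (k : ℕ) : MemLp (efun L k) 2 (μL L) :=
  (memLp_top_of_bound (efun_continuous L k).aestronglyMeasurable _
      (ae_of_all _ (efun_bound L k))).mono_exponent le_top

/-- The eigenfunction `e_{k+1}` as an element of `H` (so `eb L k` is `e_{k+1}`,
i.e. the family `eb L` runs over `e_k`, `k ≥ 1`). -/
def eb (L : ℝ) (k : ℕ) : Hsp L := (efun_memℒp L (k + 1)).toLp (efun L (k + 1))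

/-- The eigenvalue `α_{k+1} = (k+1)²π²/L²` (so `alphaK L` runs over `α_k`, `k ≥ 1`). -/
def alphaK (L : ℝ) (k : ℕ) : ℝ := ((k : ℝ) + 1) ^ 2 * π ^ 2 / L ^ 2

/-- The Fourier coefficient `⟨u, e_{k+1}⟩`. -/
def coeff (L : ℝ) (u : Hsp L) (k : ℕ) : ℝ := ⟪u, eb L k⟫_ℝ

/-- The heat Green operator `G_t h = Σ_{k≥1} e^{−α_k t} ⟨h, e_k⟩ e_k`. -/
def Gop (L t : ℝ) (h : Hsp L) : Hsp L :=
  ∑' k, (Real.exp (-(alphaK L k) * t) * coeff L h k) • eb L k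

/-- The wave Green operator `S_t h = Σ_{k≥1} (sin(√α_k t)/√α_k) ⟨h, e_k⟩ e_k`. -/
def Sop (L t : ℝ) (h : Hsp L) : Hsp L :=
  ∑' k, ((Real.sin (Real.sqrt (alphaK L k) * t) / Real.sqrt (alphaK L k)) * coeff L h k) • eb L k

/-- The derived wave Green operator `S'_t h = Σ_{k≥1} cos(√α_k t) ⟨h, e_k⟩ e_k`. -/
def Sop' (L t : ℝ) (h : Hsp L) : Hsp L :=
  ∑' k, (Real.cos (Real.sqrt (alphaK L k) * t) * coeff L h k) • eb L k

/-- The second derived wave Green operator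
`S''_t h = −Σ_{k≥1} √α_k sin(√α_k t) ⟨h, e_k⟩ e_k`. -/
def Sop'' (L t : ℝ) (h : Hsp L) : Hsp L :=
  -∑' k, (Real.sqrt (alphaK L k) * Real.sin (Real.sqrt (alphaK L k) * t) * coeff L h k) • eb L k


open scoped Topology
open intervalIntegral

lemma integral_cos_const_mul (c a b : ℝ) (hc : c ≠ 0) :
    ∫ x in a..b, Real.cos (c * x) = (Real.sin (c * b) - Real.sin (c * a)) / c := by
  have := intervalIntegral.integral_comp_mul_left (fun u => Real.cos u) hc (a := a) (b := b)
  rw [this, integral_cos]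
  rw [smul_eq_mul, div_eq_inv_mul]

lemma integral_sin_mul_sin_pi (m n : ℕ) (hm : 1 ≤ m) (hn : 1 ≤ n) :
    ∫ u in (0:ℝ)..π, Real.sin (m * u) * Real.sin (n * u)
      = if m = n then π / 2 else 0 := by
  have key : ∀ u : ℝ, Real.sin (m * u) * Real.sin (n * u)
      = (Real.cos (((m:ℝ) - n) * u) - Real.cos (((m:ℝ) + n) * u)) / 2 := by
    intro u
    rw [Real.cos_sub_cos]
    ring_nf
    rw [Real.sin_neg]
    ring
  simp_rw [key]
  rw [intervalIntegral.integral_div]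
  rw [intervalIntegral.integral_sub]
  · have hmn : ((m:ℝ) + n) ≠ 0 := by positivity
    rw [integral_cos_const_mul _ _ _ hmn]
    have h2 : Real.sin (((m:ℝ) + n) * π) = 0 := by
      have := Real.sin_int_mul_pi ((m:ℤ) + n)
      push_cast at this ⊢
      exact_mod_cast this
    by_cases h : m = n
    · subst h
      simp only [sub_self, zero_mul, Real.cos_zero, if_true]
      rw [intervalIntegral.integral_const]
      simp [h2]
    · have hmn' : ((m:ℝ) - n) ≠ 0 := by
        intro hc
        exact h (by exact_mod_cast sub_eq_zero.mp hc)
      rw [integral_cos_const_mul _ _ _ hmn']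
      have h1 : Real.sin (((m:ℝ) - n) * π) = 0 := by
        have := Real.sin_int_mul_pi ((m:ℤ) - n)
        push_cast at this ⊢
        exact_mod_cast this
      simp [h, h1, h2]
  · apply Continuous.intervalIntegrable; fun_prop
  · apply Continuous.intervalIntegrable; fun_prop

variable {E : Type*} [NormedAddCommGroup E] [InnerProductSpace ℝ E] [CompleteSpace E]

section abstr
variable {v : ℕ → E}

lemma summable_smul_of_sq (hv : Orthonormal ℝ v) {a : ℕ → ℝ} (ha : Summable (fun k => a k ^ 2)) :
    Summable (fun k => a k • v k) := by
  have := (hv.orthogonalFamily.summable_iff_norm_sq_summable a).mpr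
    (by simpa [Real.norm_eq_abs, sq_abs] using ha)
  simpa [LinearIsometry.toSpanSingleton_apply] using this

lemma norm_tsum_sq_eq (hv : Orthonormal ℝ v) {a : ℕ → ℝ} (ha : Summable (fun k => a k ^ 2)) :
    ‖∑' k, a k • v k‖ ^ 2 = ∑' k, a k ^ 2 := by
  have hs := summable_smul_of_sq hv ha
  have hS : HasSum (fun k => a k • v k) (∑' k, a k • v k) := hs.hasSum
  have h1 : Filter.Tendsto (fun s : Finset ℕ => ‖∑ i ∈ s, a i • v i‖ ^ 2)
      Filter.atTop (𝓝 (‖∑' k, a k • v k‖ ^ 2)) :=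
    ((continuous_norm.tendsto _).comp hS).pow 2
  have h2 : ∀ s : Finset ℕ, ‖∑ i ∈ s, a i • v i‖ ^ 2 = ∑ i ∈ s, a i ^ 2 := by
    intro s
    have := hv.orthogonalFamily.norm_sum a s
    simpa [LinearIsometry.toSpanSingleton_apply, Real.norm_eq_abs, sq_abs] using this
  simp_rw [h2] at h1
  exact tendsto_nhds_unique h1 ha.hasSum

end abstr


lemma inner_eb (L : ℝ) (hL : 0 < L) (j k : ℕ) :
    ⟪eb L j, eb L k⟫_ℝ = if j = k then 1 else 0 := by
  have hIc : ∫ x, efun L (j+1) x * efun L (k+1) x ∂(μL L)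
      = ∫ x in (0:ℝ)..L, efun L (j+1) x * efun L (k+1) x := by
    rw [intervalIntegral.integral_of_le hL.le, μL,
      ← MeasureTheory.integral_Ioc_eq_integral_Ioo]
  have h1 : ⟪eb L j, eb L k⟫_ℝ = ∫ x, efun L (j+1) x * efun L (k+1) x ∂(μL L) := by
    rw [eb, eb, MeasureTheory.L2.inner_def]
    apply MeasureTheory.integral_congr_ae
    filter_upwards [MemLp.coeFn_toLp (efun_memℒp L (j+1)), MemLp.coeFn_toLp (efun_memℒp L (k+1))]
      with x hx hy
    rw [hx, hy]
    simp [RCLike.inner_apply, mul_comm]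
  rw [h1, hIc]
  have hL' : L ≠ 0 := hL.ne'
  have hsq : Real.sqrt (2 / L) * Real.sqrt (2 / L) = 2 / L :=
    Real.mul_self_sqrt (by positivity)
  have harg : ∀ (m : ℕ) (x : ℝ), (m : ℝ) * π * x / L = (m : ℝ) * (π / L * x) := by
    intro m x; field_simp
  have h2 : ∀ x : ℝ, efun L (j+1) x * efun L (k+1) x
      = (2 / L) * (Real.sin (((j:ℝ)+1) * (π / L * x)) * Real.sin (((k:ℝ)+1) * (π / L * x))) := by
    intro x
    have e1 : ((j:ℝ)+1) * π * x / L = ((j:ℝ)+1) * (π / L * x) := by field_simp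
    have e2 : ((k:ℝ)+1) * π * x / L = ((k:ℝ)+1) * (π / L * x) := by field_simp
    simp only [efun]
    push_cast
    rw [e1, e2]
    linear_combination (Real.sin (((j:ℝ)+1) * (π / L * x)) * Real.sin (((k:ℝ)+1) * (π / L * x))) * hsq
  simp_rw [h2]
  rw [intervalIntegral.integral_const_mul]
  have hc : (π / L) ≠ 0 := by positivity
  have hsub := intervalIntegral.integral_comp_mul_left
    (fun u => Real.sin (((j:ℝ)+1) * u) * Real.sin (((k:ℝ)+1) * u)) hc (a := (0:ℝ)) (b := L)
  simp only [mul_zero] at hsub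
  rw [show π / L * L = π by field_simp] at hsub
  rw [hsub]
  have := integral_sin_mul_sin_pi (j+1) (k+1) (Nat.le_add_left 1 j) (Nat.le_add_left 1 k)
  push_cast at this
  rw [smul_eq_mul, this]
  by_cases h : j = k
  · subst h; simp; field_simp
  · have hne : j + 1 ≠ k + 1 := by omega
    simp [h, hne]

lemma orthonormal_eb (L : ℝ) (hL : 0 < L) : Orthonormal ℝ (eb L) := by
  rw [orthonormal_iff_ite]
  intro i j
  exact inner_eb L hL i j

lemma coeff_sq_summable (L : ℝ) (hL : 0 < L) (h : Hsp L) :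
    Summable (fun k => coeff L h k ^ 2) := by
  have := (orthonormal_eb L hL).inner_products_summable (x := h)
  simpa [coeff, Real.norm_eq_abs, sq_abs, real_inner_comm] using this

lemma tsum_coeff_sq_le (L : ℝ) (hL : 0 < L) (h : Hsp L) :
    ∑' k, coeff L h k ^ 2 ≤ ‖h‖ ^ 2 := by
  have := (orthonormal_eb L hL).tsum_inner_products_le (x := h)
  simpa [coeff, Real.norm_eq_abs, sq_abs, real_inner_comm] using this

lemma alphaK_ge (L : ℝ) (hL : 0 < L) (k : ℕ) : π ^ 2 / L ^ 2 ≤ alphaK L k := by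
  rw [alphaK, div_le_div_iff_of_pos_right (by positivity)]
  nlinarith [Real.pi_pos, Nat.cast_nonneg (α := ℝ) k, sq_nonneg (k:ℝ)]

lemma exp_coef_le (L t : ℝ) (hL : 0 < L) (ht : 0 ≤ t) (k : ℕ) :
    Real.exp (-(alphaK L k) * t) ≤ Real.exp (-(π ^ 2 / L ^ 2) * t) := by
  apply Real.exp_le_exp.mpr
  have := alphaK_ge L hL k
  nlinarith

lemma Gop_sq_summable (L t : ℝ) (hL : 0 < L) (ht : 0 ≤ t) (h : Hsp L) :
    Summable (fun k => (Real.exp (-(alphaK L k) * t) * coeff L h k) ^ 2) := by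
  apply Summable.of_nonneg_of_le (fun k => sq_nonneg _) _ (coeff_sq_summable L hL h)
  intro k
  rw [mul_pow]
  have h1 : Real.exp (-(alphaK L k) * t) ≤ 1 := by
    rw [Real.exp_le_one_iff]
    have := alphaK_ge L hL k
    have : 0 < alphaK L k := lt_of_lt_of_le (by positivity) this
    nlinarith
  have h2 : Real.exp (-(alphaK L k) * t) ^ 2 ≤ 1 := by
    nlinarith [Real.exp_nonneg (-(alphaK L k) * t)]
  exact mul_le_of_le_one_left (sq_nonneg _) h2

lemma Gop_norm_le (L t : ℝ) (hL : 0 < L) (ht : 0 ≤ t) (h : Hsp L) :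
    ‖Gop L t h‖ ≤ Real.exp (-(π ^ 2 / L ^ 2) * t) * ‖h‖ := by
  have hsum := Gop_sq_summable L t hL ht h
  have hsq : ‖Gop L t h‖ ^ 2 = ∑' k, (Real.exp (-(alphaK L k) * t) * coeff L h k) ^ 2 :=
    norm_tsum_sq_eq (orthonormal_eb L hL) hsum
  have hb : ∑' k, (Real.exp (-(alphaK L k) * t) * coeff L h k) ^ 2
      ≤ Real.exp (-(π ^ 2 / L ^ 2) * t) ^ 2 * ∑' k, coeff L h k ^ 2 := by
    rw [← tsum_mul_left]
    apply Summable.tsum_le_tsum _ hsum ((coeff_sq_summable L hL h).mul_left _)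
    intro k
    rw [mul_pow]
    have h1 := exp_coef_le L t hL ht k
    have h2 := Real.exp_nonneg (-(alphaK L k) * t)
    exact mul_le_mul_of_nonneg_right (by nlinarith) (sq_nonneg _)
  have hfin : ‖Gop L t h‖ ^ 2 ≤ (Real.exp (-(π ^ 2 / L ^ 2) * t) * ‖h‖) ^ 2 := by
    rw [hsq, mul_pow]
    calc _ ≤ Real.exp (-(π ^ 2 / L ^ 2) * t) ^ 2 * ∑' k, coeff L h k ^ 2 := hb
      _ ≤ _ := by
          apply mul_le_mul_of_nonneg_left (tsum_coeff_sq_le L hL h) (sq_nonneg _)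
  have := Real.sqrt_le_sqrt hfin
  rwa [Real.sqrt_sq (norm_nonneg _), Real.sqrt_sq (by positivity)] at this

set_option synthInstance.maxHeartbeats 1000000 in
lemma Gop_sub (L t : ℝ) (hL : 0 < L) (ht : 0 ≤ t) (u v : Hsp L) :
    Gop L t (u - v) = Gop L t u - Gop L t v := by
  unfold Gop
  rw [← Summable.tsum_sub (summable_smul_of_sq (orthonormal_eb L hL) (Gop_sq_summable L t hL ht u))
        (summable_smul_of_sq (orthonormal_eb L hL) (Gop_sq_summable L t hL ht v))]
  congr 1
  funext k
  rw [← sub_smul]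
  congr 1
  simp [coeff, inner_sub_left]
  ring
lemma exp_diff_sq_summable (L : ℝ) (hL : 0 < L) (h : Hsp L) (τ t₀ : ℝ) (hτ : 0 ≤ τ) (ht₀ : 0 ≤ t₀) :
    Summable (fun k => ((Real.exp (-(alphaK L k) * τ) - Real.exp (-(alphaK L k) * t₀))
      * coeff L h k) ^ 2) := by
  apply Summable.of_nonneg_of_le (fun k => sq_nonneg _) _
    ((coeff_sq_summable L hL h).mul_left 4)
  intro k
  have hα : 0 < alphaK L k := lt_of_lt_of_le (by positivity) (alphaK_ge L hL k)
  have h1 : Real.exp (-(alphaK L k) * τ) ≤ 1 := by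
    rw [Real.exp_le_one_iff]; nlinarith
  have h2 : Real.exp (-(alphaK L k) * t₀) ≤ 1 := by
    rw [Real.exp_le_one_iff]; nlinarith
  have h3 := Real.exp_nonneg (-(alphaK L k) * τ)
  have h4 := Real.exp_nonneg (-(alphaK L k) * t₀)
  rw [mul_pow]
  have : (Real.exp (-(alphaK L k) * τ) - Real.exp (-(alphaK L k) * t₀)) ^ 2 ≤ 4 := by nlinarith
  nlinarith [sq_nonneg (coeff L h k)]

set_option synthInstance.maxHeartbeats 1000000 in
lemma Gop_diff_norm_sq (L : ℝ) (hL : 0 < L) (h : Hsp L) (τ t₀ : ℝ) (hτ : 0 ≤ τ) (ht₀ : 0 ≤ t₀) :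
    ‖Gop L τ h - Gop L t₀ h‖ ^ 2
      = ∑' k, ((Real.exp (-(alphaK L k) * τ) - Real.exp (-(alphaK L k) * t₀)) * coeff L h k) ^ 2 := by
  have hd : Gop L τ h - Gop L t₀ h
      = ∑' k, (((Real.exp (-(alphaK L k) * τ) - Real.exp (-(alphaK L k) * t₀))
          * coeff L h k)) • eb L k := by
    rw [Gop, Gop, ← Summable.tsum_sub (summable_smul_of_sq (orthonormal_eb L hL) (Gop_sq_summable L τ hL hτ h))
      (summable_smul_of_sq (orthonormal_eb L hL) (Gop_sq_summable L t₀ hL ht₀ h))]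
    congr 1
    funext k
    rw [← sub_smul]
    ring_nf
  rw [hd]
  exact norm_tsum_sq_eq (orthonormal_eb L hL) (exp_diff_sq_summable L hL h τ t₀ hτ ht₀)

lemma Gop_continuousOn (L : ℝ) (hL : 0 < L) (h : Hsp L) :
    ContinuousOn (fun τ => Gop L τ h) (Set.Ici (0:ℝ)) := by
  intro t₀ ht₀
  rw [ContinuousWithinAt, tendsto_iff_norm_sub_tendsto_zero]
  have hF : Filter.Tendsto
      (fun τ => ∑' k, ((Real.exp (-(alphaK L k) * τ) - Real.exp (-(alphaK L k) * t₀))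
        * coeff L h k) ^ 2) (nhdsWithin t₀ (Set.Ici 0)) (𝓝 0) := by
    have := tendsto_tsum_of_dominated_convergence
      (𝓕 := nhdsWithin t₀ (Set.Ici 0))
      (f := fun τ k => ((Real.exp (-(alphaK L k) * τ) - Real.exp (-(alphaK L k) * t₀))
        * coeff L h k) ^ 2)
      (g := fun _ => (0:ℝ)) (bound := fun k => 4 * coeff L h k ^ 2)
      ((coeff_sq_summable L hL h).mul_left 4) ?_ ?_
    · simpa using this
    · intro k
      have : Filter.Tendsto (fun τ => ((Real.exp (-(alphaK L k) * τ)
          - Real.exp (-(alphaK L k) * t₀)) * coeff L h k) ^ 2) (𝓝 t₀) (𝓝 0) := by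
        have hc : Continuous (fun τ => ((Real.exp (-(alphaK L k) * τ)
            - Real.exp (-(alphaK L k) * t₀)) * coeff L h k) ^ 2) := by fun_prop
        have := hc.tendsto t₀
        simpa using this
      exact this.mono_left nhdsWithin_le_nhds
    · filter_upwards [eventually_mem_nhdsWithin] with τ hτ
      intro k
      have hα : 0 < alphaK L k := lt_of_lt_of_le (by positivity) (alphaK_ge L hL k)
      have hτ' : (0:ℝ) ≤ τ := hτ
      have ht₀' : (0:ℝ) ≤ t₀ := ht₀
      have h1 : Real.exp (-(alphaK L k) * τ) ≤ 1 := by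
        rw [Real.exp_le_one_iff]; nlinarith
      have h2 : Real.exp (-(alphaK L k) * t₀) ≤ 1 := by
        rw [Real.exp_le_one_iff]; nlinarith
      have h3 := Real.exp_nonneg (-(alphaK L k) * τ)
      have h4 := Real.exp_nonneg (-(alphaK L k) * t₀)
      rw [Real.norm_eq_abs, abs_of_nonneg (sq_nonneg _), mul_pow]
      have h5 : (Real.exp (-(alphaK L k) * τ) - Real.exp (-(alphaK L k) * t₀)) ^ 2 ≤ 4 := by
        nlinarith
      nlinarith [sq_nonneg (coeff L h k)]
  have hnorm : Filter.Tendsto (fun τ => ‖Gop L τ h - Gop L t₀ h‖)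
      (nhdsWithin t₀ (Set.Ici 0)) (𝓝 0) := by
    have hsqrt := (Real.continuous_sqrt.tendsto 0).comp hF
    rw [Real.sqrt_zero] at hsqrt
    apply hsqrt.congr'
    filter_upwards [eventually_mem_nhdsWithin] with τ hτ
    simp only [Function.comp_apply]
    rw [← Gop_diff_norm_sq L hL h τ t₀ hτ ht₀, Real.sqrt_sq (norm_nonneg _)]
  exact hnorm
lemma integrand_contOn (L : ℝ) (hL : 0 < L) (t : ℝ) (w : ℝ → Hsp L) (hw : Continuous w) :
    ContinuousOn (fun s => Gop L (t - s) (w s)) (Set.Icc 0 t) := by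
  intro s₀ hs₀
  rw [ContinuousWithinAt, tendsto_iff_norm_sub_tendsto_zero]
  have hs₀' := Set.mem_Icc.mp hs₀
  have hts₀ : 0 ≤ t - s₀ := by linarith [hs₀'.1, hs₀'.2]
  have hmaps : Set.MapsTo (fun s => t - s) (Set.Icc 0 t) (Set.Ici (0:ℝ)) := by
    intro s hs
    have := Set.mem_Icc.mp hs
    simp only [Set.mem_Ici]
    linarith [this.1, this.2]
  have htends : Filter.Tendsto (fun s => t - s) (nhdsWithin s₀ (Set.Icc 0 t))
      (nhdsWithin (t - s₀) (Set.Ici 0)) :=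
    ((continuous_const.sub continuous_id).continuousWithinAt).tendsto_nhdsWithin hmaps
  have h2 : Filter.Tendsto (fun s => ‖Gop L (t - s) (w s₀) - Gop L (t - s₀) (w s₀)‖)
      (nhdsWithin s₀ (Set.Icc 0 t)) (𝓝 0) :=
    tendsto_iff_norm_sub_tendsto_zero.mp ((Gop_continuousOn L hL (w s₀) (t - s₀)
      hts₀).tendsto.comp htends)
  have h1 : Filter.Tendsto (fun s => ‖w s - w s₀‖) (nhdsWithin s₀ (Set.Icc 0 t)) (𝓝 0) :=
    tendsto_iff_norm_sub_tendsto_zero.mp hw.continuousAt.continuousWithinAt.tendsto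
  have hsum : Filter.Tendsto (fun s => ‖w s - w s₀‖
      + ‖Gop L (t - s) (w s₀) - Gop L (t - s₀) (w s₀)‖)
      (nhdsWithin s₀ (Set.Icc 0 t)) (𝓝 0) := by
    have := h1.add h2; simpa using this
  apply squeeze_zero' (Filter.Eventually.of_forall fun s => norm_nonneg _) _ hsum
  filter_upwards [eventually_mem_nhdsWithin] with s hs
  have hs' := Set.mem_Icc.mp hs
  have hts : 0 ≤ t - s := by linarith [hs'.1, hs'.2]
  have hdecomp : Gop L (t - s) (w s) - Gop L (t - s₀) (w s₀)
      = Gop L (t - s) (w s - w s₀) + (Gop L (t - s) (w s₀) - Gop L (t - s₀) (w s₀)) := by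
    rw [Gop_sub L (t - s) hL hts]
    abel
  rw [hdecomp]
  refine (norm_add_le _ _).trans (add_le_add ?_ le_rfl)
  have := Gop_norm_le L (t - s) hL hts (w s - w s₀)
  have hexp : Real.exp (-(π ^ 2 / L ^ 2) * (t - s)) ≤ 1 := by
    rw [Real.exp_le_one_iff]
    have : (0:ℝ) ≤ π ^ 2 / L ^ 2 := by positivity
    nlinarith
  nlinarith [norm_nonneg (w s - w s₀), norm_nonneg (Gop L (t-s) (w s - w s₀)),
    Real.exp_nonneg (-(π ^ 2 / L ^ 2) * (t - s))]

/-- Exponential contraction for the deterministic frozen fast equation: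
if `g` is Lipschitz with constant `L_g < π²/L²` and `Y, Y'` are continuous mild solutions on
`[0,∞)` with initial data `y, y'`, then `‖Y_t − Y'_t‖ ≤ e^{−(π²/L² − L_g)t} ‖y − y'‖` for all
`t ≥ 0`. -/
theorem stmt_14 (L : ℝ) (hL : 0 < L) (g : Hsp L → Hsp L) (Lg : ℝ)
    (hg : ∀ u v : Hsp L, ‖g u - g v‖ ≤ Lg * ‖u - v‖) (hLg : Lg < π ^ 2 / L ^ 2)
    (y y' : Hsp L) (Y Y' : ℝ → Hsp L)
    (hYc : ContinuousOn Y (Set.Ici (0:ℝ))) (hY'c : ContinuousOn Y' (Set.Ici (0:ℝ)))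
    (hY : ∀ t : ℝ, 0 ≤ t → Y t = Gop L t y + ∫ s in (0:ℝ)..t, Gop L (t - s) (g (Y s)))
    (hY' : ∀ t : ℝ, 0 ≤ t → Y' t = Gop L t y' + ∫ s in (0:ℝ)..t, Gop L (t - s) (g (Y' s))) :
    ∀ t : ℝ, 0 ≤ t →
      ‖Y t - Y' t‖ ≤ Real.exp (-(π ^ 2 / L ^ 2 - Lg) * t) * ‖y - y'‖ := by
  intro t ht
  set α : ℝ := π ^ 2 / L ^ 2 with hαdef
  have hα0 : 0 < α := by rw [hαdef]; positivity
  have hLg0 : 0 ≤ Lg := by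
    have h1 : ‖eb L 0‖ = 1 := (orthonormal_eb L hL).1 0
    have h2 := hg (eb L 0) 0
    rw [sub_zero, h1, mul_one] at h2
    exact le_trans (norm_nonneg _) h2
  have hgc : Continuous g := by
    have hlip : LipschitzWith (Real.toNNReal Lg) g := by
      apply LipschitzWith.of_dist_le_mul
      intro x z
      rw [dist_eq_norm, dist_eq_norm, Real.coe_toNNReal _ hLg0]
      exact hg x z
    exact hlip.continuous
  set Ym : ℝ → Hsp L := fun s => Y (max s 0) with hYmdef
  set Ym' : ℝ → Hsp L := fun s => Y' (max s 0) with hYm'def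
  have hmax : Continuous (fun s : ℝ => max s 0) := continuous_id.max continuous_const
  have hYmc : Continuous Ym := hYc.comp_continuous hmax (fun x => le_max_right x 0)
  have hYm'c : Continuous Ym' := hY'c.comp_continuous hmax (fun x => le_max_right x 0)
  set f : ℝ → ℝ := fun s => ‖Ym s - Ym' s‖ with hfdef
  have hfc : Continuous f := (hYmc.sub hYm'c).norm
  have hf_nonneg : ∀ s, 0 ≤ f s := fun s => norm_nonneg _
  have hfeq : ∀ s : ℝ, 0 ≤ s → f s = ‖Y s - Y' s‖ := by
    intro s hs
    simp only [hfdef, hYmdef, hYm'def, max_eq_left hs]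
  set C := ‖y - y'‖ with hCdef
  have hC0 : 0 ≤ C := norm_nonneg _
  set w : ℝ → Hsp L := fun s => g (Ym s) with hwdef
  set w' : ℝ → Hsp L := fun s => g (Ym' s) with hw'def
  have hwc : Continuous w := hgc.comp hYmc
  have hw'c : Continuous w' := hgc.comp hYm'c
  set W : ℝ → Hsp L := fun s => w s - w' s with hWdef
  have hWc : Continuous W := hwc.sub hw'c
  -- Step A : the key integral inequality
  have main : ∀ u : ℝ, 0 ≤ u → f u ≤ Real.exp (-α * u) * C
      + ∫ s in (0:ℝ)..u, Real.exp (-α * (u - s)) * (Lg * f s) := by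
    intro u hu
    have huIcc : Set.uIcc (0:ℝ) u = Set.Icc 0 u := Set.uIcc_of_le hu
    have hint1 : IntervalIntegrable (fun s => Gop L (u - s) (w s)) volume 0 u :=
      (huIcc ▸ integrand_contOn L hL u w hwc).intervalIntegrable
    have hint2 : IntervalIntegrable (fun s => Gop L (u - s) (w' s)) volume 0 u :=
      (huIcc ▸ integrand_contOn L hL u w' hw'c).intervalIntegrable
    have hintW : IntervalIntegrable (fun s => Gop L (u - s) (W s)) volume 0 u :=
      (huIcc ▸ integrand_contOn L hL u W hWc).intervalIntegrable
    have hrepr : Y u - Y' u = Gop L u (y - y')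
        + ∫ s in (0:ℝ)..u, Gop L (u - s) (W s) := by
      rw [hY u hu, hY' u hu]
      have e1 : (∫ s in (0:ℝ)..u, Gop L (u - s) (g (Y s)))
          = ∫ s in (0:ℝ)..u, Gop L (u - s) (w s) := by
        apply intervalIntegral.integral_congr
        intro s hs
        rw [Set.uIcc_of_le hu] at hs
        simp only [hwdef, hYmdef, max_eq_left hs.1]
      have e2 : (∫ s in (0:ℝ)..u, Gop L (u - s) (g (Y' s)))
          = ∫ s in (0:ℝ)..u, Gop L (u - s) (w' s) := by
        apply intervalIntegral.integral_congr
        intro s hs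
        rw [Set.uIcc_of_le hu] at hs
        simp only [hw'def, hYm'def, max_eq_left hs.1]
      have e3 : (∫ s in (0:ℝ)..u, Gop L (u - s) (W s))
          = (∫ s in (0:ℝ)..u, Gop L (u - s) (w s))
            - ∫ s in (0:ℝ)..u, Gop L (u - s) (w' s) := by
        rw [← intervalIntegral.integral_sub hint1 hint2]
        apply intervalIntegral.integral_congr
        intro s hs
        rw [Set.uIcc_of_le hu] at hs
        rw [hWdef]
        exact Gop_sub L (u - s) hL (by linarith [hs.1, hs.2]) (w s) (w' s)
      rw [e1, e2, e3, Gop_sub L u hL hu]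
      abel
    have hnormbound : ∀ x ∈ Set.Icc (0:ℝ) u, ‖Gop L (u - x) (W x)‖
        ≤ Real.exp (-α * (u - x)) * (Lg * f x) := by
      intro x hx
      have hux : 0 ≤ u - x := by linarith [hx.1, hx.2]
      refine (Gop_norm_le L (u - x) hL hux (W x)).trans ?_
      apply mul_le_mul_of_nonneg_left _ (Real.exp_nonneg _)
      exact hg (Ym x) (Ym' x)
    calc f u = ‖Y u - Y' u‖ := hfeq u hu
      _ ≤ ‖Gop L u (y - y')‖ + ‖∫ s in (0:ℝ)..u, Gop L (u - s) (W s)‖ := by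
          rw [hrepr]; exact norm_add_le _ _
      _ ≤ Real.exp (-α * u) * C
          + ∫ s in (0:ℝ)..u, Real.exp (-α * (u - s)) * (Lg * f s) := by
          apply add_le_add (Gop_norm_le L u hL hu (y - y'))
          refine (intervalIntegral.norm_integral_le_integral_norm hu).trans ?_
          apply intervalIntegral.integral_mono_on hu hintW.norm _ hnormbound
          apply Continuous.intervalIntegrable
          fun_prop
  -- Step B : the Gronwall-form inequality
  set φ : ℝ → ℝ := fun s => Real.exp (α * s) * f s with hφdef
  have hφc : Continuous φ := by fun_prop
  have hφ_nonneg : ∀ s, 0 ≤ φ s := fun s => mul_nonneg (Real.exp_nonneg _) (hf_nonneg s)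
  have hφle : ∀ u : ℝ, 0 ≤ u → φ u ≤ C + Lg * ∫ s in (0:ℝ)..u, φ s := by
    intro u hu
    have h1 := mul_le_mul_of_nonneg_left (main u hu) (Real.exp_nonneg (α * u))
    have h2 : Real.exp (α * u) * (Real.exp (-α * u) * C
        + ∫ s in (0:ℝ)..u, Real.exp (-α * (u - s)) * (Lg * f s))
        = C + Lg * ∫ s in (0:ℝ)..u, φ s := by
      rw [mul_add, ← mul_assoc, ← Real.exp_add]
      rw [show α * u + -α * u = 0 by ring, Real.exp_zero, one_mul]
      congr 1
      rw [← intervalIntegral.integral_const_mul, ← intervalIntegral.integral_const_mul]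
      apply intervalIntegral.integral_congr
      intro s _
      simp only [hφdef]
      rw [← mul_assoc, ← Real.exp_add, show α * u + -α * (u - s) = α * s by ring]
      ring
    calc φ u = Real.exp (α * u) * f u := rfl
      _ ≤ Real.exp (α * u) * (Real.exp (-α * u) * C
            + ∫ s in (0:ℝ)..u, Real.exp (-α * (u - s)) * (Lg * f s)) := h1
      _ = C + Lg * ∫ s in (0:ℝ)..u, φ s := h2
  -- Step C : Gronwall
  set F : ℝ → ℝ := fun x => ∫ s in (0:ℝ)..x, φ s with hFdef
  have hFderiv : ∀ x ∈ Set.Ico (0:ℝ) t, HasDerivWithinAt F (φ x) (Set.Ici x) x := by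
    intro x _
    exact intervalIntegral.integral_hasDerivWithinAt_right
      (hφc.intervalIntegrable 0 x) (hφc.stronglyMeasurableAtFilter _ _)
      hφc.continuousWithinAt
  have hFc : Continuous F := by
    rw [continuous_iff_continuousAt]
    intro x
    exact (intervalIntegral.integral_hasDerivAt_right
      (hφc.intervalIntegrable 0 x) (hφc.stronglyMeasurableAtFilter _ _)
      hφc.continuousAt).continuousAt
  have hbound : ∀ x ∈ Set.Ico (0:ℝ) t, ‖φ x‖ ≤ Lg * ‖F x‖ + C := by
    intro x hx
    have hFx : 0 ≤ F x := intervalIntegral.integral_nonneg hx.1 (fun s _ => hφ_nonneg s)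
    rw [Real.norm_eq_abs, abs_of_nonneg (hφ_nonneg x), Real.norm_eq_abs, abs_of_nonneg hFx]
    linarith [hφle x hx.1]
  have hF0 : ‖F 0‖ ≤ 0 := by
    simp [hFdef, intervalIntegral.integral_same]
  have hgron := norm_le_gronwallBound_of_norm_deriv_right_le hFc.continuousOn hFderiv hF0 hbound
    t ⟨ht, le_rfl⟩
  rw [sub_zero] at hgron
  have hFt : 0 ≤ F t := intervalIntegral.integral_nonneg ht (fun s _ => hφ_nonneg s)
  have hFt' : F t ≤ gronwallBound 0 Lg C t := by
    calc F t ≤ |F t| := le_abs_self _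
      _ = ‖F t‖ := (Real.norm_eq_abs _).symm
      _ ≤ _ := hgron
  have hgb : C + Lg * gronwallBound 0 Lg C t ≤ C * Real.exp (Lg * t) := by
    by_cases hK : Lg = 0
    · subst hK
      simp [gronwallBound_K0]
    · have hgbt := congrFun (gronwallBound_of_K_ne_0 (δ := 0) (ε := C) hK) t
      rw [hgbt]
      field_simp
      have hexpand : C * (Real.exp (Lg * t) - 1) = C * Real.exp (Lg * t) - C := by ring
      linarith
  have hφt : φ t ≤ C * Real.exp (Lg * t) := by
    calc φ t ≤ C + Lg * F t := hφle t ht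
      _ ≤ C + Lg * gronwallBound 0 Lg C t := by
          apply add_le_add_right
          exact mul_le_mul_of_nonneg_left hFt' hLg0
      _ ≤ C * Real.exp (Lg * t) := hgb
  have hfinal : f t = Real.exp (-(α * t)) * φ t := by
    simp only [hφdef]
    rw [← mul_assoc, ← Real.exp_add]
    simp
  rw [← hfeq t ht, hfinal]
  calc Real.exp (-(α * t)) * φ t ≤ Real.exp (-(α * t)) * (C * Real.exp (Lg * t)) :=
        mul_le_mul_of_nonneg_left hφt (Real.exp_nonneg _)
    _ = Real.exp (-(α - Lg) * t) * C := by
        rw [show Real.exp (-(α * t)) * (C * Real.exp (Lg * t))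
            = Real.exp (-(α * t)) * Real.exp (Lg * t) * C by ring, ← Real.exp_add,
          show -(α * t) + Lg * t = -(α - Lg) * t by ring]
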